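/- For every h ≥ 1, the black pebbling price of the pyramid graph of height h is exactly Peb(Π_h) = h + 2. -/

import Mathlib

/-- Vertices of the pyramid graph of height `h`: the vertex `(L, i)` is the
`i`-th vertex (from the left) on level `L`, where `L + i ≤ h`. -/
abbrev PyrV (h : ℕ) := {p : ℕ × ℕ // p.1 + p.2 ≤ h}

/-- The immediate predecessors of a vertex in the pyramid graph: the `i`-th
vertex on level `L ≥ 1` has incoming edges from the `i`-th and `(i+1)`-st
vertices on level `L - 1`; vertices on level `0` are sources. -/
def pyrPred (h : ℕ) (v : PyrV h) : Finset (PyrV h) :=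
  if hv : v.1.1 = 0 then ∅
  else
    {⟨(v.1.1 - 1, v.1.2), by have := v.2; show v.1.1 - 1 + v.1.2 ≤ h; omega⟩,
     ⟨(v.1.1 - 1, v.1.2 + 1), by have := v.2; show v.1.1 - 1 + (v.1.2 + 1) ≤ h; omega⟩}

/-- The unique sink of the pyramid graph of height `h`. -/
def pyrSink (h : ℕ) : PyrV h := ⟨(h, 0), by show h + 0 ≤ h; omega⟩
/-- A move in the black pebble game: place a black pebble on a vertex all of
whose immediate predecessors are pebbled (in particular on any source), or
remove a black pebble from any vertex. -/
inductive BMove {V : Type} [DecidableEq V] (pred : V → Finset V) :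
    Finset V → Finset V → Prop
  | place {B : Finset V} {v : V} (h : pred v ⊆ B) : BMove pred B (insert v B)
  | remove {B : Finset V} {v : V} (h : v ∈ B) : BMove pred B (B.erase v)

/-- A complete black pebbling: starts with no pebbles and ends with a single
black pebble on the sink `z`. -/
structure BPebbling {V : Type} [DecidableEq V] (pred : V → Finset V) (z : V) where
  len : ℕ
  cfg : ℕ → Finset V
  init : cfg 0 = ∅
  final : cfg len = {z}
  steps : ∀ t < len, BMove pred (cfg t) (cfg (t + 1))

/-- The cost of a black pebbling: the maximal number of pebbles used. -/
def BPebbling.cost {V : Type} [DecidableEq V] {pred : V → Finset V} {z : V}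
    (P : BPebbling pred z) : ℕ :=
  (Finset.range (P.len + 1)).sup fun t => (P.cfg t).card

/-- The black pebbling price: the minimum cost of a complete black pebbling. -/
noncomputable def bPebPrice {V : Type} [DecidableEq V] (pred : V → Finset V) (z : V) : ℕ :=
  sInf { c | ∃ P : BPebbling pred z, P.cost = c }



namespace PyrAux

variable {V : Type} [DecidableEq V]

/-- Apply one operation: `(true, v)` places, `(false, v)` removes. -/
def app (B : Finset V) (o : Bool × V) : Finset V :=
  if o.1 then insert o.2 B else B.erase o.2

def exec (B : Finset V) : List (Bool × V) → Finset V
  | [] => B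
  | o :: l => exec (app B o) l

def Valid (pred : V → Finset V) : Finset V → List (Bool × V) → Prop
  | _, [] => True
  | B, o :: l => (if o.1 then pred o.2 ⊆ B else o.2 ∈ B) ∧ Valid pred (app B o) l

def peak (B : Finset V) : List (Bool × V) → ℕ
  | [] => B.card
  | o :: l => max B.card (peak (app B o) l)

def cfgFun (B : Finset V) : List (Bool × V) → ℕ → Finset V
  | _, 0 => B
  | [], _ + 1 => B
  | o :: l, t + 1 => cfgFun (app B o) l t

lemma exec_append (B : Finset V) (l l' : List (Bool × V)) :
    exec B (l ++ l') = exec (exec B l) l' := by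
  induction l generalizing B with
  | nil => rfl
  | cons o l ih => simp [exec, ih]

lemma Valid_append {pred : V → Finset V} {B : Finset V} {l l' : List (Bool × V)}
    (h1 : Valid pred B l) (h2 : Valid pred (exec B l) l') : Valid pred B (l ++ l') := by
  induction l generalizing B with
  | nil => exact h2
  | cons o l ih => exact ⟨h1.1, ih h1.2 h2⟩

lemma peak_append (B : Finset V) (l l' : List (Bool × V)) :
    peak B (l ++ l') = max (peak B l) (peak (exec B l) l') := by
  induction l generalizing B with
  | nil =>
    simp only [List.nil_append, exec, peak]
    have : B.card ≤ peak B l' := by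
      cases l' with
      | nil => simp [peak]
      | cons o l' => simp [peak]
    omega
  | cons o l ih => simp [peak, exec, ih, max_assoc]

lemma card_le_peak (B : Finset V) (l : List (Bool × V)) : B.card ≤ peak B l := by
  cases l with
  | nil => simp [peak]
  | cons o l => simp [peak]

lemma cfgFun_zero (B : Finset V) (l : List (Bool × V)) : cfgFun B l 0 = B := by
  cases l <;> rfl

lemma cfgFun_length (B : Finset V) (l : List (Bool × V)) :
    cfgFun B l l.length = exec B l := by
  induction l generalizing B with
  | nil => rfl
  | cons o l ih => simpa [cfgFun, exec] using ih (app B o)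

lemma cfgFun_card_le_peak (B : Finset V) (l : List (Bool × V)) (t : ℕ) :
    (cfgFun B l t).card ≤ peak B l := by
  induction l generalizing B t with
  | nil => cases t <;> simp [cfgFun, peak]
  | cons o l ih =>
    cases t with
    | zero => simpa [cfgFun] using card_le_peak _ _
    | succ t =>
      calc (cfgFun (app B o) l t).card ≤ peak (app B o) l := ih _ _
        _ ≤ peak B (o :: l) := le_max_right _ _

lemma cfgFun_step {pred : V → Finset V} (B : Finset V) (l : List (Bool × V))
    (hv : Valid pred B l) (t : ℕ) (ht : t < l.length) :
    BMove pred (cfgFun B l t) (cfgFun B l (t + 1)) := by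
  induction l generalizing B t with
  | nil => simp at ht
  | cons o l ih =>
    cases t with
    | zero =>
      show BMove pred B (cfgFun (app B o) l 0)
      rw [cfgFun_zero]
      obtain ⟨h1, _⟩ := hv
      by_cases hb : o.1
      · simp only [hb, if_true] at h1
        simpa [app, hb] using BMove.place h1
      · rw [if_neg hb] at h1
        simpa [app, hb] using BMove.remove h1
    | succ t => exact ih (app B o) hv.2 t (by simpa using ht)

end PyrAux

namespace PyrAux

lemma pyrPred_eq {h : ℕ} (v : PyrV h) (hv : v.1.1 ≠ 0) :
    pyrPred h v =
      {⟨(v.1.1 - 1, v.1.2), by have := v.2; omega⟩,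
       ⟨(v.1.1 - 1, v.1.2 + 1), by have := v.2; omega⟩} := by
  rw [pyrPred, dif_neg hv]

lemma pyrPred_src {h : ℕ} (v : PyrV h) (hv : v.1.1 = 0) : pyrPred h v = ∅ := by
  rw [pyrPred, dif_pos hv]

lemma pyrV_eq_iff {h : ℕ} (a b : PyrV h) : a = b ↔ a.1.1 = b.1.1 ∧ a.1.2 = b.1.2 := by
  constructor
  · rintro rfl; exact ⟨rfl, rfl⟩
  · rintro ⟨h1, h2⟩
    exact Subtype.ext (Prod.ext h1 h2)

lemma pyrV_mk_eq {h : ℕ} {a b c d : ℕ} {pa : a + b ≤ h} {pc : c + d ≤ h}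
    (hac : a = c) (hbd : b = d) : (⟨(a, b), pa⟩ : PyrV h) = ⟨(c, d), pc⟩ := by
  subst hac; subst hbd; rfl

/-- The standard recursive pebbling strategy for the sub-pyramid under `(L, i)`. -/
def strat (h : ℕ) : (L i : ℕ) → L + i ≤ h → List (Bool × PyrV h)
  | 0, i, hp => [(true, ⟨(0, i), hp⟩)]
  | L + 1, i, hp =>
      strat h L (i + 1) (by omega) ++ strat h L i (by omega) ++
        [(true, ⟨(L + 1, i), hp⟩), (false, ⟨(L, i), by omega⟩),
         (false, ⟨(L, i + 1), by omega⟩)]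

lemma strat_spec (h : ℕ) : ∀ (L i : ℕ) (hp : L + i ≤ h) (B : Finset (PyrV h)),
    (∀ x ∈ B, ¬ (i ≤ x.1.2 ∧ x.1.1 + x.1.2 ≤ L + i)) →
    Valid (pyrPred h) B (strat h L i hp) ∧
      exec B (strat h L i hp) = insert ⟨(L, i), hp⟩ B ∧
      peak B (strat h L i hp) ≤ B.card + L + 2 := by
  intro L
  induction L with
  | zero =>
    intro i hp B hB
    refine ⟨⟨?_, trivial⟩, rfl, ?_⟩
    · simp only [if_true]
      rw [pyrPred_src _ rfl]
      exact Finset.empty_subset _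
    · simp only [strat, peak, app, if_true]
      have := Finset.card_insert_le (⟨(0, i), hp⟩ : PyrV h) B
      omega
  | succ L ih =>
    intro i hp B hB
    set v : PyrV h := ⟨(L + 1, i), hp⟩ with hv
    set u1 : PyrV h := ⟨(L, i), by omega⟩ with hu1
    set u2 : PyrV h := ⟨(L, i + 1), by omega⟩ with hu2
    have ev1 : v.1.1 = L + 1 := rfl
    have ev2 : v.1.2 = i := rfl
    have e11 : u1.1.1 = L := rfl
    have e12 : u1.1.2 = i := rfl
    have e21 : u2.1.1 = L := rfl
    have e22 : u2.1.2 = i + 1 := rfl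
    have hu1B : u1 ∉ B := fun hm => hB u1 hm ⟨by omega, by omega⟩
    have hu2B : u2 ∉ B := fun hm => hB u2 hm ⟨by omega, by omega⟩
    have hvB : v ∉ B := fun hm => hB v hm ⟨by omega, by omega⟩
    have hne12 : u1 ≠ u2 := fun e => by rw [pyrV_eq_iff] at e; omega
    have hnev1 : v ≠ u1 := fun e => by rw [pyrV_eq_iff] at e; omega
    have hnev2 : v ≠ u2 := fun e => by rw [pyrV_eq_iff] at e; omega
    -- phase 1 : pebble u2
    obtain ⟨val1, ex1, pk1⟩ := ih (i + 1) (by omega) B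
      (fun x hx hc => hB x hx ⟨by omega, by omega⟩)
    -- phase 2 : pebble u1 starting from insert u2 B
    have hdisj2 : ∀ x ∈ insert u2 B, ¬ (i ≤ x.1.2 ∧ x.1.1 + x.1.2 ≤ L + i) := by
      intro x hx hc
      rcases Finset.mem_insert.1 hx with rfl | hx
      · omega
      · exact hB x hx ⟨hc.1, by omega⟩
    obtain ⟨val2, ex2, pk2⟩ := ih i (by omega) (insert u2 B) hdisj2
    have hcard2 : (insert u2 B).card = B.card + 1 := Finset.card_insert_of_notMem hu2B
    -- phase 3
    have hpreds : pyrPred h v ⊆ insert u1 (insert u2 B) := by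
      rw [pyrPred_eq v (by omega)]
      intro x hx
      rcases Finset.mem_insert.1 hx with rfl | hx
      · refine Finset.mem_insert.2 (Or.inl (Subtype.ext ?_))
        show ((v.1.1 - 1 : ℕ), (v.1.2 : ℕ)) = (u1.1 : ℕ × ℕ)
        rw [show (u1.1 : ℕ × ℕ) = (L, i) from rfl]
        simp
        refine ⟨?_, ?_⟩ <;> omega
      · rw [Finset.mem_singleton] at hx
        subst hx
        refine Finset.mem_insert.2 (Or.inr (Finset.mem_insert.2 (Or.inl (Subtype.ext ?_))))
        show ((v.1.1 - 1 : ℕ), (v.1.2 + 1 : ℕ)) = (u2.1 : ℕ × ℕ)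
        rw [show (u2.1 : ℕ × ℕ) = (L, i + 1) from rfl]
        simp
        refine ⟨?_, ?_⟩ <;> omega
    have hval3 : Valid (pyrPred h) (insert u1 (insert u2 B))
        [(true, v), (false, u1), (false, u2)] := by
      refine ⟨by simpa using hpreds, ?_, ?_, trivial⟩
      · show u1 ∈ insert v (insert u1 (insert u2 B))
        simp
      · show u2 ∈ ((insert v (insert u1 (insert u2 B))).erase u1)
        rw [Finset.mem_erase]
        exact ⟨Ne.symm hne12, by simp⟩
    have hu1nm : u1 ∉ insert u2 B := by
      simp only [Finset.mem_insert]
      push_neg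
      exact ⟨hne12, hu1B⟩
    have hex3 : exec (insert u1 (insert u2 B)) [(true, v), (false, u1), (false, u2)]
        = insert v B := by
      show ((insert v (insert u1 (insert u2 B))).erase u1).erase u2 = insert v B
      rw [Finset.erase_insert_of_ne (Ne.symm hnev1).symm]
      rw [Finset.erase_insert hu1nm]
      rw [Finset.erase_insert_of_ne (Ne.symm hnev2).symm]
      rw [Finset.erase_insert hu2B]
    have hpk3 : peak (insert u1 (insert u2 B)) [(true, v), (false, u1), (false, u2)]
        ≤ B.card + 3 := by
      have c2 : (insert u1 (insert u2 B)).card = B.card + 2 := by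
        rw [Finset.card_insert_of_notMem hu1nm, hcard2]
      have c3 : (insert v (insert u1 (insert u2 B))).card ≤ B.card + 3 := by
        have := Finset.card_insert_le v (insert u1 (insert u2 B)); omega
      have c4 := Finset.card_erase_le
        (s := insert v (insert u1 (insert u2 B))) (a := u1)
      have c5 := Finset.card_erase_le
        (s := (insert v (insert u1 (insert u2 B))).erase u1) (a := u2)
      simp only [peak, app, Bool.false_eq_true, Bool.true_eq_false, if_false, if_true,
        ite_false, ite_true]
      omega
    -- assemble
    rw [strat]
    refine ⟨?_, ?_, ?_⟩
    · apply Valid_append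
      · apply Valid_append val1
        rw [ex1]; exact val2
      · rw [exec_append, ex1, ex2]
        exact hval3
    · rw [List.append_assoc, exec_append, exec_append, ex1, ex2, hex3]
    · rw [List.append_assoc, peak_append, peak_append]
      refine max_le (le_trans pk1 (by omega)) (max_le ?_ ?_)
      · rw [ex1]
        exact le_trans pk2 (by omega)
      · rw [ex1, ex2]
        exact le_trans hpk3 (by omega)

end PyrAux

namespace PyrAux

lemma BMove_mem {V : Type} [DecidableEq V] {pred : V → Finset V} {B C : Finset V}
    (m : BMove pred B C) {v : V} (h1 : v ∉ B) (h2 : v ∈ C) :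
    pred v ⊆ B ∧ C = insert v B := by
  cases m with
  | place hp =>
    rcases Finset.mem_insert.1 h2 with rfl | hB
    · exact ⟨hp, rfl⟩
    · exact absurd hB h1
  | remove hm => exact absurd (Finset.mem_of_mem_erase h2) h1

variable {h : ℕ} (P : BPebbling (pyrPred h) (pyrSink h))

lemma first_place {a b : ℕ} {v : PyrV h} (hab : a ≤ b) (hb : b ≤ P.len)
    (h1 : v ∉ P.cfg a) (h2 : v ∈ P.cfg b) :
    ∃ r, a ≤ r ∧ r + 1 ≤ b ∧ (∀ x, a ≤ x → x ≤ r → v ∉ P.cfg x) ∧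
      pyrPred h v ⊆ P.cfg r ∧ P.cfg (r + 1) = insert v (P.cfg r) := by
  classical
  have hanb : a < b := lt_of_le_of_ne hab (by rintro rfl; exact h1 h2)
  have hex : ∃ m, a < m ∧ v ∈ P.cfg m := ⟨b, hanb, h2⟩
  set m0 := Nat.find hex with hm0
  obtain ⟨ham, hvm⟩ := Nat.find_spec hex
  have hm0b : m0 ≤ b := Nat.find_min' hex ⟨hanb, h2⟩
  have hmin : ∀ x, a ≤ x → x ≤ m0 - 1 → v ∉ P.cfg x := by
    intro x hax hxr hmem
    rcases eq_or_lt_of_le hax with rfl | hax'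
    · exact h1 hmem
    · exact Nat.find_min hex (by omega) ⟨hax', hmem⟩
  have hm01 : m0 - 1 + 1 = m0 := by omega
  have hlt : m0 - 1 < P.len := by omega
  have hnot : v ∉ P.cfg (m0 - 1) := hmin _ (by omega) (le_refl _)
  have hmem1 : v ∈ P.cfg (m0 - 1 + 1) := by rw [hm01]; exact hvm
  obtain ⟨hp, hc⟩ := BMove_mem (P.steps (m0 - 1) hlt) hnot hmem1
  exact ⟨m0 - 1, by omega, by omega, hmin, hp, hc⟩

/-- `c`-th vertex (from the bottom) of the left (`side = false`) or right
(`side = true`) straight edge path descending from `v`. -/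
def edgePt {h : ℕ} (v : PyrV h) (side : Bool) (c : ℕ) : PyrV h :=
  ⟨(min c v.1.1, if side then v.1.2 + (v.1.1 - min c v.1.1) else v.1.2), by
    have := v.2
    dsimp only
    split <;> omega⟩

lemma edgePt_fst {h : ℕ} (v : PyrV h) (side : Bool) (c : ℕ) :
    (edgePt v side c).1.1 = min c v.1.1 := by cases side <;> rfl

lemma edgePt_snd_false {h : ℕ} (v : PyrV h) (c : ℕ) :
    (edgePt v false c).1.2 = v.1.2 := rfl

lemma edgePt_snd_true {h : ℕ} (v : PyrV h) (c : ℕ) :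
    (edgePt v true c).1.2 = v.1.2 + (v.1.1 - min c v.1.1) := rfl

lemma main_lower : ∀ (L n s t : ℕ) (v : PyrV h) (side : Bool),
    1 ≤ v.1.1 → v.1.1 = L → t - s = n → s ≤ t → t + 1 ≤ P.len →
    (∀ c, c ≤ v.1.1 → edgePt v side c ∉ P.cfg s) →
    (∀ x, s ≤ x → x ≤ t → v ∉ P.cfg x) →
    pyrPred h v ⊆ P.cfg t → P.cfg (t + 1) = insert v (P.cfg t) →
    ∃ w, s < w ∧ w ≤ t + 1 ∧
      v.1.1 + 2 ≤ ((P.cfg w).filter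
        (fun x => v.1.2 ≤ x.1.2 ∧ x.1.1 + x.1.2 ≤ v.1.1 + v.1.2)).card := by
  intro L
  induction L using Nat.strong_induction_on with
  | _ L IHL =>
  intro n
  induction n using Nat.strong_induction_on with
  | _ n IHn =>
  intro s t v side hL1 hLv hn hst htlen hfree hvnot hpred hins
  -- the two predecessors of v
  obtain ⟨u1, hu1v, hu1m⟩ :
      ∃ u : PyrV h, u.1 = (v.1.1 - 1, v.1.2) ∧ u ∈ pyrPred h v :=
    ⟨⟨(v.1.1 - 1, v.1.2), by have := v.2; omega⟩, rfl, by
      rw [pyrPred_eq v (by omega)]; exact Finset.mem_insert_self _ _⟩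
  obtain ⟨u2, hu2v, hu2m⟩ :
      ∃ u : PyrV h, u.1 = (v.1.1 - 1, v.1.2 + 1) ∧ u ∈ pyrPred h v :=
    ⟨⟨(v.1.1 - 1, v.1.2 + 1), by have := v.2; omega⟩, rfl, by
      rw [pyrPred_eq v (by omega)]
      exact Finset.mem_insert.2 (Or.inr (Finset.mem_singleton_self _))⟩
  have e11 : u1.1.1 = v.1.1 - 1 := by rw [hu1v]
  have e12 : u1.1.2 = v.1.2 := by rw [hu1v]
  have e21 : u2.1.1 = v.1.1 - 1 := by rw [hu2v]
  have e22 : u2.1.2 = v.1.2 + 1 := by rw [hu2v]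
  have hu1t : u1 ∈ P.cfg t := hpred hu1m
  have hu2t : u2 ∈ P.cfg t := hpred hu2m
  by_cases hL2 : L ≤ 1
  · -- base case : L = 1, three pebbles at time t+1
    have hL : L = 1 := by omega
    refine ⟨t + 1, by omega, le_refl _, ?_⟩
    have hsub : insert u1 (insert u2 {v}) ⊆ (P.cfg (t + 1)).filter
        (fun x => v.1.2 ≤ x.1.2 ∧ x.1.1 + x.1.2 ≤ v.1.1 + v.1.2) := by
      intro x hx
      rw [Finset.mem_filter]
      rcases Finset.mem_insert.1 hx with rfl | hx
      · exact ⟨by rw [hins]; exact Finset.mem_insert_of_mem hu1t, by omega, by omega⟩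
      rcases Finset.mem_insert.1 hx with rfl | hx
      · exact ⟨by rw [hins]; exact Finset.mem_insert_of_mem hu2t, by omega, by omega⟩
      · rw [Finset.mem_singleton] at hx
        subst hx
        exact ⟨by rw [hins]; exact Finset.mem_insert_self _ _, by omega, by omega⟩
    have hne12 : u1 ≠ u2 := fun e => by rw [pyrV_eq_iff] at e; omega
    have hne1v : u1 ≠ v := fun e => by rw [pyrV_eq_iff] at e; omega
    have hne2v : u2 ≠ v := fun e => by rw [pyrV_eq_iff] at e; omega
    have hcard : (insert u1 (insert u2 ({v} : Finset (PyrV h)))).card = 3 := by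
      rw [Finset.card_insert_of_notMem (by simp [hne12, hne1v]),
        Finset.card_insert_of_notMem (by simp [hne2v]), Finset.card_singleton]
    have := Finset.card_le_card hsub
    omega
  · -- inductive case : L ≥ 2
    push_neg at hL2
    -- u : the predecessor on the free edge, u' : the other one
    obtain ⟨u, u', hum, hu'm, eu1, eu2, eu'1, eu'2⟩ :
        ∃ u u' : PyrV h, u ∈ P.cfg t ∧ u' ∈ P.cfg t ∧
          u.1.1 = v.1.1 - 1 ∧
          u.1.2 = (if side then v.1.2 + 1 else v.1.2) ∧
          u'.1.1 = v.1.1 - 1 ∧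
          u'.1.2 = (if side then v.1.2 else v.1.2 + 1) := by
      cases side
      · exact ⟨u1, u2, hu1t, hu2t, e11, e12, e21, e22⟩
      · exact ⟨u2, u1, hu2t, hu1t, e21, e22, e11, e12⟩
    -- u is the (L-1)-st point of the free edge, hence unpebbled at time s
    have hEdge : ∀ c, (edgePt v side c).1.1 = min c v.1.1 ∧
        (edgePt v side c).1.2 =
          (if side then v.1.2 + (v.1.1 - min c v.1.1) else v.1.2) := by
      intro c
      cases side
      · exact ⟨edgePt_fst v false c, edgePt_snd_false v c⟩
      · exact ⟨edgePt_fst v true c, edgePt_snd_true v c⟩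
    have hus : u ∉ P.cfg s := by
      have := hfree (v.1.1 - 1) (by omega)
      have heq : edgePt v side (v.1.1 - 1) = u := by
        rw [pyrV_eq_iff]
        obtain ⟨f1, f2⟩ := hEdge (v.1.1 - 1)
        constructor
        · rw [f1, eu1]; omega
        · rw [f2, eu2]; cases side <;> simp <;> omega
      rwa [heq] at this
    -- first placement of u after time s
    obtain ⟨r, hsr, hr1, humin, hupred, huins⟩ :=
      first_place P hst (by omega) hus hum
    -- outer induction hypothesis applied to u
    have hufree : ∀ c, c ≤ u.1.1 → edgePt u side c ∉ P.cfg s := by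
      intro c hc
      have heq : edgePt u side c = edgePt v side c := by
        rw [pyrV_eq_iff]
        obtain ⟨f1, f2⟩ := hEdge c
        have g : ∀ c', (edgePt u side c').1.1 = min c' u.1.1 ∧
            (edgePt u side c').1.2 =
              (if side then u.1.2 + (u.1.1 - min c' u.1.1) else u.1.2) := by
          intro c'
          cases side
          · exact ⟨edgePt_fst u false c', edgePt_snd_false u c'⟩
          · exact ⟨edgePt_fst u true c', edgePt_snd_true u c'⟩
        obtain ⟨g1, g2⟩ := g c
        constructor
        · rw [f1, g1]; omega
        · rw [f2, g2]; cases side <;> simp at eu2 ⊢ <;> omega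
      rw [heq]
      exact hfree c (by omega)
    obtain ⟨w0, hw0s, hw0r, hw0card⟩ :=
      IHL (L - 1) (by omega) (r - s) s r u side (by omega) (by omega) rfl hsr
        (by omega) hufree humin hupred huins
    by_cases hcase : ∃ x ∈ P.cfg w0,
        (v.1.2 ≤ x.1.2 ∧ x.1.1 + x.1.2 ≤ v.1.1 + v.1.2) ∧
          ¬(u.1.2 ≤ x.1.2 ∧ x.1.1 + x.1.2 ≤ u.1.1 + u.1.2)
    · -- a pebble inside S(v) but outside S(u) : L+2 pebbles in S(v) at time w0
      obtain ⟨x, hxmem, hxv, hxu⟩ := hcase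
      have hmono : (P.cfg w0).filter
            (fun y => u.1.2 ≤ y.1.2 ∧ y.1.1 + y.1.2 ≤ u.1.1 + u.1.2) ⊆
          (P.cfg w0).filter
            (fun y => v.1.2 ≤ y.1.2 ∧ y.1.1 + y.1.2 ≤ v.1.1 + v.1.2) := by
        intro y hy
        rw [Finset.mem_filter] at hy ⊢
        refine ⟨hy.1, ?_, ?_⟩ <;>
          · have := hy.2.1; have := hy.2.2; cases side <;> simp at eu1 eu2 <;> omega
      have hxnot : x ∉ (P.cfg w0).filter
          (fun y => u.1.2 ≤ y.1.2 ∧ y.1.1 + y.1.2 ≤ u.1.1 + u.1.2) := by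
        rw [Finset.mem_filter]
        tauto
      have hins' : insert x ((P.cfg w0).filter
            (fun y => u.1.2 ≤ y.1.2 ∧ y.1.1 + y.1.2 ≤ u.1.1 + u.1.2)) ⊆
          (P.cfg w0).filter
            (fun y => v.1.2 ≤ y.1.2 ∧ y.1.1 + y.1.2 ≤ v.1.1 + v.1.2) := by
        intro y hy
        rcases Finset.mem_insert.1 hy with rfl | hy
        · rw [Finset.mem_filter]; exact ⟨hxmem, hxv⟩
        · exact hmono hy
      have hc1 := Finset.card_le_card hins'
      rw [Finset.card_insert_of_notMem hxnot] at hc1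
      exact ⟨w0, hw0s, by omega, by omega⟩
    · -- otherwise the opposite edge from v is completely free at time w0
      push_neg at hcase
      have hofree : ∀ c, c ≤ v.1.1 → edgePt v (!side) c ∉ P.cfg w0 := by
        intro c hc hmem
        cases side
        · simp only [Bool.not_false] at hmem
          have g1 : (edgePt v true c).1.1 = min c v.1.1 := edgePt_fst v true c
          have g2 : (edgePt v true c).1.2 = v.1.2 + (v.1.1 - min c v.1.1) :=
            edgePt_snd_true v c
          simp at eu2
          have h2 := hcase _ hmem ⟨by omega, by omega⟩
          omega
        · simp only [Bool.not_true] at hmem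
          have g1 : (edgePt v false c).1.1 = min c v.1.1 := edgePt_fst v false c
          have g2 : (edgePt v false c).1.2 = v.1.2 := edgePt_snd_false v c
          simp at eu2
          have h2 := hcase _ hmem ⟨by omega, by omega⟩
          omega
      have hmw : t - w0 < n := by omega
      obtain ⟨w, hw1, hw2, hw3⟩ :=
        IHn (t - w0) hmw w0 t v (!side) hL1 hLv rfl (by omega) htlen hofree
          (fun x hx1 hx2 => hvnot x (by omega) hx2) hpred hins
      exact ⟨w, by omega, hw2, hw3⟩

end PyrAux

namespace PyrAux

lemma lower_bound {h : ℕ} (hh : 1 ≤ h) (P : BPebbling (pyrPred h) (pyrSink h)) :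
    h + 2 ≤ P.cost := by
  have h0 : pyrSink h ∉ P.cfg 0 := by rw [P.init]; exact Finset.notMem_empty _
  have hlen : pyrSink h ∈ P.cfg P.len := by rw [P.final]; exact Finset.mem_singleton_self _
  obtain ⟨r, h0r, hr1, hmin, hpredz, hinsz⟩ :=
    first_place P (Nat.zero_le _) (le_refl _) h0 hlen
  have hz1 : (pyrSink h).1.1 = h := rfl
  obtain ⟨w, hws, hwt, hwcard⟩ :=
    main_lower P h r 0 r (pyrSink h) false (by omega) (by omega) rfl (by omega) hr1
      (fun c hc => by rw [P.init]; exact Finset.notMem_empty _)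
      (fun x hx1 hx2 => hmin x hx1 hx2) hpredz hinsz
  have hc1 : ((P.cfg w).filter
      (fun x => (pyrSink h).1.2 ≤ x.1.2 ∧
        x.1.1 + x.1.2 ≤ (pyrSink h).1.1 + (pyrSink h).1.2)).card ≤ (P.cfg w).card :=
    Finset.card_filter_le _ _
  have hc2 : (P.cfg w).card ≤ P.cost :=
    Finset.le_sup (f := fun t => (P.cfg t).card) (Finset.mem_range.2 (by omega))
  omega

lemma upper_bound (h : ℕ) :
    ∃ P : BPebbling (pyrPred h) (pyrSink h), P.cost ≤ h + 2 := by
  obtain ⟨hval, hexec, hpeak⟩ :=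
    strat_spec h h 0 (by omega) ∅ (by intro x hx; exact absurd hx (Finset.notMem_empty _))
  refine ⟨⟨(strat h h 0 (by omega)).length, cfgFun ∅ (strat h h 0 (by omega)),
    cfgFun_zero _ _, ?_, fun t ht => cfgFun_step _ _ hval t ht⟩, ?_⟩
  · rw [cfgFun_length, hexec]
    rfl
  · show Finset.sup _ _ ≤ h + 2
    refine Finset.sup_le fun t _ => ?_
    show (cfgFun ∅ (strat h h 0 (by omega)) t).card ≤ h + 2
    have h1 := cfgFun_card_le_peak (∅ : Finset (PyrV h)) (strat h h 0 (by omega)) t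
    have h2 := hpeak
    simp only [Finset.card_empty] at h2
    omega

end PyrAux


/-- For every `h ≥ 1`, the black pebbling price of the
pyramid graph of height `h` is exactly `Peb(Π_h) = h + 2`. -/
theorem pyramid_black_pebbling_price (h : ℕ) (hh : 1 ≤ h) :
    bPebPrice (pyrPred h) (pyrSink h) = h + 2 := by
  obtain ⟨P0, hP0⟩ := PyrAux.upper_bound h
  have hmem : P0.cost ∈ {c | ∃ P : BPebbling (pyrPred h) (pyrSink h), P.cost = c} :=
    ⟨P0, rfl⟩
  unfold bPebPrice
  apply le_antisymm
  · calc sInf {c | ∃ P : BPebbling (pyrPred h) (pyrSink h), P.cost = c} ≤ P0.cost :=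
        Nat.sInf_le hmem
      _ ≤ h + 2 := hP0
  · apply le_csInf ⟨P0.cost, hmem⟩
    rintro b ⟨P, rfl⟩
    exact PyrAux.lower_bound hh P
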